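/- Let 0 < a < b < c and Q(x) = a x₁² + b x₂² + c x₃². Then the level set {x ∈ S² : Q(x) = b} equals the union of the two great circles S² ∩ {x : √(b-a)·x₁ = √(c-b)·x₃} and S² ∩ {x : √(b-a)·x₁ = −√(c-b)·x₃}; this level set contains the two points (0, ±1, 0) and is path-connected. -/

import Mathlib

open Metric Set

private noncomputable def pt3 (u v w : ℝ) : EuclideanSpace ℝ (Fin 3) :=
  (WithLp.equiv 2 (Fin 3 → ℝ)).symm ![u, v, w]

private lemma pt3_apply0 (u v w : ℝ) : pt3 u v w 0 = u := rfl
private lemma pt3_apply1 (u v w : ℝ) : pt3 u v w 1 = v := rfl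
private lemma pt3_apply2 (u v w : ℝ) : pt3 u v w 2 = w := rfl

private lemma pt3_cont {α : Type*} [TopologicalSpace α] {f g h : α → ℝ}
    (hf : Continuous f) (hg : Continuous g) (hh : Continuous h) :
    Continuous fun t => pt3 (f t) (g t) (h t) := by
  apply (PiLp.continuous_toLp 2 (fun _ : Fin 3 => ℝ)).comp
  apply continuous_pi
  intro i
  fin_cases i <;> simpa

private lemma mem_sphere3 (x : EuclideanSpace ℝ (Fin 3)) :
    x ∈ sphere (0 : EuclideanSpace ℝ (Fin 3)) 1 ↔ x 0 ^ 2 + x 1 ^ 2 + x 2 ^ 2 = 1 := by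
  rw [mem_sphere_zero_iff_norm, EuclideanSpace.norm_eq, Fin.sum_univ_three]
  simp only [Real.norm_eq_abs, sq_abs]
  constructor
  · intro h
    have := congrArg (· ^ 2) h
    simpa [Real.sq_sqrt (by positivity : (0:ℝ) ≤ x 0 ^ 2 + x 1 ^ 2 + x 2 ^ 2)] using this
  · intro h; rw [h]; exact Real.sqrt_one

private lemma exists_angle (u v : ℝ) (h : u ^ 2 + v ^ 2 = 1) :
    ∃ θ : ℝ, Real.cos θ = v ∧ Real.sin θ = u := by
  have hv1 : -1 ≤ v := by nlinarith
  have hv2 : v ≤ 1 := by nlinarith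
  have hs : Real.sin (Real.arccos v) = Real.sqrt (1 - v ^ 2) := Real.sin_arccos v
  have hu : Real.sqrt (1 - v ^ 2) = |u| := by
    rw [show 1 - v ^ 2 = u ^ 2 by linarith, Real.sqrt_sq_eq_abs]
  rcases le_or_gt 0 u with hu0 | hu0
  · exact ⟨Real.arccos v, Real.cos_arccos hv1 hv2, by rw [hs, hu, abs_of_nonneg hu0]⟩
  · exact ⟨-Real.arccos v, by rw [Real.cos_neg]; exact Real.cos_arccos hv1 hv2,
      by rw [Real.sin_neg, hs, hu, abs_of_neg hu0, neg_neg]⟩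

set_option maxHeartbeats 1000000 in
theorem stmt_12 (a b c : ℝ) (ha : 0 < a) (hab : a < b) (hbc : b < c) :
    ({x : EuclideanSpace ℝ (Fin 3) |
        x ∈ sphere (0 : EuclideanSpace ℝ (Fin 3)) 1
          ∧ a * x 0 ^ 2 + b * x 1 ^ 2 + c * x 2 ^ 2 = b}
      = (sphere (0 : EuclideanSpace ℝ (Fin 3)) 1
            ∩ {x : EuclideanSpace ℝ (Fin 3) |
                Real.sqrt (b - a) * x 0 = Real.sqrt (c - b) * x 2})
        ∪ (sphere (0 : EuclideanSpace ℝ (Fin 3)) 1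
            ∩ {x : EuclideanSpace ℝ (Fin 3) |
                Real.sqrt (b - a) * x 0 = -(Real.sqrt (c - b) * x 2)}))
    ∧ EuclideanSpace.single (1 : Fin 3) (1 : ℝ) ∈
        {x : EuclideanSpace ℝ (Fin 3) |
          x ∈ sphere (0 : EuclideanSpace ℝ (Fin 3)) 1
            ∧ a * x 0 ^ 2 + b * x 1 ^ 2 + c * x 2 ^ 2 = b}
    ∧ -EuclideanSpace.single (1 : Fin 3) (1 : ℝ) ∈
        {x : EuclideanSpace ℝ (Fin 3) |
          x ∈ sphere (0 : EuclideanSpace ℝ (Fin 3)) 1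
            ∧ a * x 0 ^ 2 + b * x 1 ^ 2 + c * x 2 ^ 2 = b}
    ∧ IsPathConnected {x : EuclideanSpace ℝ (Fin 3) |
        x ∈ sphere (0 : EuclideanSpace ℝ (Fin 3)) 1
          ∧ a * x 0 ^ 2 + b * x 1 ^ 2 + c * x 2 ^ 2 = b} := by
  have hba : (0:ℝ) < b - a := by linarith
  have hcb : (0:ℝ) < c - b := by linarith
  have hca : (0:ℝ) < c - a := by linarith
  have hsq1 : Real.sqrt (b - a) ^ 2 = b - a := Real.sq_sqrt hba.le
  have hsq2 : Real.sqrt (c - b) ^ 2 = c - b := Real.sq_sqrt hcb.le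
  have hsq3 : Real.sqrt (c - a) ^ 2 = c - a := Real.sq_sqrt hca.le
  -- the set equality
  have hEq : ({x : EuclideanSpace ℝ (Fin 3) |
        x ∈ sphere (0 : EuclideanSpace ℝ (Fin 3)) 1
          ∧ a * x 0 ^ 2 + b * x 1 ^ 2 + c * x 2 ^ 2 = b}
      = (sphere (0 : EuclideanSpace ℝ (Fin 3)) 1
            ∩ {x : EuclideanSpace ℝ (Fin 3) |
                Real.sqrt (b - a) * x 0 = Real.sqrt (c - b) * x 2})
        ∪ (sphere (0 : EuclideanSpace ℝ (Fin 3)) 1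
            ∩ {x : EuclideanSpace ℝ (Fin 3) |
                Real.sqrt (b - a) * x 0 = -(Real.sqrt (c - b) * x 2)})) := by
    ext x
    simp only [mem_setOf_eq, mem_union, mem_inter_iff]
    constructor
    · rintro ⟨hs, hQ⟩
      have hsum := (mem_sphere3 x).mp hs
      have key : (Real.sqrt (b - a) * x 0) ^ 2 = (Real.sqrt (c - b) * x 2) ^ 2 := by
        have : (b - a) * x 0 ^ 2 = (c - b) * x 2 ^ 2 := by nlinarith
        rw [mul_pow, mul_pow, hsq1, hsq2]; exact this
      rcases sq_eq_sq_iff_eq_or_eq_neg.mp key with h | h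
      · exact Or.inl ⟨hs, h⟩
      · exact Or.inr ⟨hs, h⟩
    · rintro (⟨hs, h⟩ | ⟨hs, h⟩) <;>
      · refine ⟨hs, ?_⟩
        have hsum := (mem_sphere3 x).mp hs
        have key0 : (Real.sqrt (b - a) * x 0) ^ 2 = (Real.sqrt (c - b) * x 2) ^ 2 := by
          rw [h]; try rw [neg_sq]
        rw [mul_pow, mul_pow, hsq1, hsq2] at key0
        nlinarith
  have hy1 : EuclideanSpace.single (1 : Fin 3) (1 : ℝ) ∈
      {x : EuclideanSpace ℝ (Fin 3) |
        x ∈ sphere (0 : EuclideanSpace ℝ (Fin 3)) 1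
          ∧ a * x 0 ^ 2 + b * x 1 ^ 2 + c * x 2 ^ 2 = b} := by
    constructor
    · rw [mem_sphere3]; simp [EuclideanSpace.single_apply]
    · simp [EuclideanSpace.single_apply]
  have hy2 : -EuclideanSpace.single (1 : Fin 3) (1 : ℝ) ∈
      {x : EuclideanSpace ℝ (Fin 3) |
        x ∈ sphere (0 : EuclideanSpace ℝ (Fin 3)) 1
          ∧ a * x 0 ^ 2 + b * x 1 ^ 2 + c * x 2 ^ 2 = b} := by
    constructor
    · rw [mem_sphere3]; simp [EuclideanSpace.single_apply]
    · simp [EuclideanSpace.single_apply]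
  refine ⟨hEq, hy1, hy2, ?_⟩
  -- path connectedness
  set S := {x : EuclideanSpace ℝ (Fin 3) |
        x ∈ sphere (0 : EuclideanSpace ℝ (Fin 3)) 1
          ∧ a * x 0 ^ 2 + b * x 1 ^ 2 + c * x 2 ^ 2 = b} with hS
  set r := Real.sqrt (c - b) / Real.sqrt (c - a) with hr
  set s := Real.sqrt (b - a) / Real.sqrt (c - a) with hs
  have hrpos : 0 < r := by positivity
  have hspos : 0 < s := by positivity
  have hr2 : r ^ 2 = (c - b) / (c - a) := by rw [hr, div_pow, hsq2, hsq3]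
  have hs2 : s ^ 2 = (b - a) / (c - a) := by rw [hs, div_pow, hsq1, hsq3]
  have hrs : r ^ 2 + s ^ 2 = 1 := by
    rw [hr2, hs2, ← add_div, div_eq_one_iff_eq hca.ne']; ring
  have hQrs : a * r ^ 2 + c * s ^ 2 = b := by
    rw [hr2, hs2]; field_simp; ring
  refine ⟨EuclideanSpace.single (1 : Fin 3) (1 : ℝ), hy1, ?_⟩
  intro x hx
  -- x lies on one of the two circles
  have hx' := hx
  rw [hEq] at hx'
  -- extract ε
  obtain ⟨ε, hε2, hxe⟩ : ∃ ε : ℝ, ε ^ 2 = 1 ∧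
      Real.sqrt (b - a) * x 0 = ε * (Real.sqrt (c - b) * x 2) := by
    rcases hx' with ⟨_, h⟩ | ⟨_, h⟩
    · exact ⟨1, one_pow 2, by rw [one_mul]; exact h⟩
    · exact ⟨-1, by ring, by rw [neg_one_mul]; exact h⟩
  obtain ⟨hxs, hxQ⟩ := hx
  have hsum := (mem_sphere3 x).mp hxs
  set u := x 0 / r with hu
  have hx0 : x 0 = r * u := by rw [hu]; field_simp
  have hx2 : x 2 = ε * (s * u) := by
    have hB : (0:ℝ) < Real.sqrt (c - b) := Real.sqrt_pos.mpr hcb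
    have hC : (0:ℝ) < Real.sqrt (c - a) := Real.sqrt_pos.mpr hca
    have hsu : Real.sqrt (c - b) * (ε * (s * u)) = ε * (Real.sqrt (b - a) * x 0) := by
      rw [hs, hu, hr]
      field_simp
    have h2 : Real.sqrt (c - b) * x 2 = Real.sqrt (c - b) * (ε * (s * u)) := by
      rw [hsu]
      linear_combination (-ε) * hxe - (Real.sqrt (c - b) * x 2) * hε2
    exact mul_left_cancel₀ hB.ne' h2
  set v := x 1 with hv
  have huv : u ^ 2 + v ^ 2 = 1 := by
    have : x 0 ^ 2 + x 2 ^ 2 = u ^ 2 := by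
      rw [hx0, hx2]; linear_combination u ^ 2 * hrs + s ^ 2 * u ^ 2 * hε2
    linarith [hsum]
  obtain ⟨θ, hcos, hsin⟩ := exists_angle u v huv
  -- the path
  have hmem : ∀ t : ℝ,
      pt3 (r * Real.sin t) (Real.cos t) (ε * (s * Real.sin t)) ∈ S := by
    intro t
    have hpyth := Real.sin_sq_add_cos_sq t
    constructor
    · rw [mem_sphere3, pt3_apply0, pt3_apply1, pt3_apply2]
      linear_combination (Real.sin t) ^ 2 * hrs + s ^ 2 * (Real.sin t) ^ 2 * hε2 + hpyth
    · show a * _ + b * _ + c * _ = b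
      rw [pt3_apply0, pt3_apply1, pt3_apply2]
      linear_combination (Real.sin t) ^ 2 * hQrs + c * s ^ 2 * (Real.sin t) ^ 2 * hε2 + b * hpyth
  refine ⟨⟨⟨fun σ => pt3 (r * Real.sin (σ * θ)) (Real.cos (σ * θ))
      (ε * (s * Real.sin (σ * θ))), ?_⟩, ?_, ?_⟩, fun σ => hmem _⟩
  · exact pt3_cont (by fun_prop) (by fun_prop) (by fun_prop)
  · show pt3 _ _ _ = _
    simp only [Icc.coe_zero, zero_mul, Real.sin_zero, Real.cos_zero, mul_zero]
    ext i
    fin_cases i <;> simp [pt3, EuclideanSpace.single_apply]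
  · show pt3 _ _ _ = x
    simp only [Icc.coe_one, one_mul, hcos, hsin]
    ext i
    fin_cases i <;>
      simp [pt3, hx0, hx2, ← hv]
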